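/- Let |·| be a norm on ℝⁿ with induced logarithmic norm μ, let X ⊆ ℝⁿ, and consider the system ẋ = f(t, x) where f : ℝ × ℝⁿ → ℝⁿ is continuous with continuous partial derivatives in x. Let x' be a known trajectory of the system in X defined on an interval J, and suppose there is c ∈ ℝ such that μ(M_{x'(t)} f_t(x, s)) ≤ c for every t ∈ J, every x ∈ X, and every s ∈ [0,1]ⁿ, where f_t(·) = f(t, ·). Then for any trajectory x of the system in X defined on a subinterval [t₀, T] ⊆ J, one has |x(t) − x'(t)| ≤ e^{c(t−t₀)} |x(t₀) − x'(t₀)| for every t ∈ [t₀, T]. -/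

import Mathlib

open Filter Topology Set Matrix

/-- `N` is a norm on `ℝⁿ`. -/
def IsNorm {n : ℕ} (N : (Fin n → ℝ) → ℝ) : Prop :=
  (∀ x y, N (x + y) ≤ N x + N y) ∧
  (∀ (a : ℝ) (x : Fin n → ℝ), N (a • x) = |a| * N x) ∧
  (∀ x, N x = 0 → x = 0)

/-- The operator norm on `ℝⁿˣⁿ` induced by the norm `N`. -/
noncomputable def opNorm {n : ℕ} (N : (Fin n → ℝ) → ℝ) (A : Matrix (Fin n) (Fin n) ℝ) : ℝ :=
  sSup ((fun x => N (A.mulVec x)) '' {x | N x = 1})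

/-- The logarithmic norm `μ(A) = lim_{h → 0⁺} (‖I + hA‖ - 1)/h` induced by the norm `N`. -/
noncomputable def logNorm {n : ℕ} (N : (Fin n → ℝ) → ℝ) (A : Matrix (Fin n) (Fin n) ℝ) : ℝ :=
  limUnder (𝓝[>] (0 : ℝ)) (fun h => (opNorm N (1 + h • A) - 1) / h)

/-- The mixed Jacobian matrix `M_{x'}f(x,s)`, whose `(i,j)` entry is
`∂f_i/∂x_j(x₁, …, x_{j-1}, s_j x_j + (1-s_j) x'_j, x'_{j+1}, …, x'_n)`. -/
noncomputable def mixedJac {n m : ℕ} (f : (Fin n → ℝ) → (Fin m → ℝ)) (x' x s : Fin n → ℝ) :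
    Matrix (Fin m) (Fin n) ℝ :=
  fun i j =>
    fderiv ℝ f
      (fun k => if k < j then x k else if k = j then s j * x j + (1 - s j) * x' j else x' k)
      (Pi.single j 1) i

namespace Stmt7Aux

/-! ### A type synonym carrying the norm `N` -/

variable {n : ℕ} {N : (Fin n → ℝ) → ℝ}

theorem nzero (hN : IsNorm N) : N 0 = 0 := by
  have := hN.2.1 0 0
  simpa using this

theorem nneg' (hN : IsNorm N) (x : Fin n → ℝ) : N (-x) = N x := by
  have := hN.2.1 (-1) x
  simpa using this

/-- Type synonym on which `N` is the norm. -/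
def NormSp (_hN : IsNorm N) : Type := Fin n → ℝ

instance (hN : IsNorm N) : AddCommGroup (NormSp hN) :=
  inferInstanceAs (AddCommGroup (Fin n → ℝ))

noncomputable instance (hN : IsNorm N) : Module ℝ (NormSp hN) :=
  inferInstanceAs (Module ℝ (Fin n → ℝ))

noncomputable instance (hN : IsNorm N) : NormedAddCommGroup (NormSp hN) :=
  AddGroupNorm.toNormedAddCommGroup
    { toFun := N
      map_zero' := nzero hN
      add_le' := hN.1
      neg' := nneg' hN
      eq_zero_of_map_eq_zero' := hN.2.2 }

noncomputable instance (hN : IsNorm N) : NormedSpace ℝ (NormSp hN) :=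
  ⟨fun a x => le_of_eq (by rw [Real.norm_eq_abs]; exact hN.2.1 a x)⟩

instance (hN : IsNorm N) : FiniteDimensional ℝ (NormSp hN) :=
  inferInstanceAs (Module.Finite ℝ (Fin n → ℝ))

theorem norm_normSp (hN : IsNorm N) (v : NormSp hN) : ‖v‖ = N v := rfl

/-- The identity as a linear equivalence. -/
noncomputable def toNS (hN : IsNorm N) : (Fin n → ℝ) ≃ₗ[ℝ] NormSp hN :=
  { toFun := fun v => v
    map_add' := fun _ _ => rfl
    map_smul' := fun _ _ => rfl
    invFun := fun v => v
    left_inv := fun _ => rfl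
    right_inv := fun _ => rfl }

noncomputable def toNSL (hN : IsNorm N) : (Fin n → ℝ) →L[ℝ] NormSp hN :=
  LinearMap.toContinuousLinearMap (toNS hN).toLinearMap

theorem norm_toNSL (hN : IsNorm N) (v : Fin n → ℝ) : ‖toNSL hN v‖ = N v := rfl

theorem continuous_N (hN : IsNorm N) : Continuous N := by
  have : N = fun v => ‖toNSL hN v‖ := rfl
  rw [this]
  exact (toNSL hN).continuous.norm

/-! ### Matrices as continuous linear maps on `NormSp` -/

/-- `A ↦ mulVec A` as a linear map into CLMs on `NormSp hN`. -/
noncomputable def clmL (hN : IsNorm N) :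
    Matrix (Fin n) (Fin n) ℝ →ₗ[ℝ] (NormSp hN →L[ℝ] NormSp hN) where
  toFun A := LinearMap.toContinuousLinearMap
    ((toNS hN).toLinearMap ∘ₗ A.mulVecLin ∘ₗ (toNS hN).symm.toLinearMap)
  map_add' A B := by
    ext v
    show (A + B).mulVec v = A.mulVec v + B.mulVec v
    exact Matrix.add_mulVec A B v
  map_smul' a A := by
    ext v
    show (a • A).mulVec v = a • (A.mulVec v)
    exact Matrix.smul_mulVec a A v

theorem clmL_apply (hN : IsNorm N) (A : Matrix (Fin n) (Fin n) ℝ) (v : Fin n → ℝ) :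
    clmL hN A (toNSL hN v) = toNSL hN (A.mulVec v) := rfl

theorem clmL_one (hN : IsNorm N) : clmL hN 1 = 1 := by
  ext v
  show (1 : Matrix (Fin n) (Fin n) ℝ).mulVec v = v
  exact Matrix.one_mulVec v

theorem continuous_clmL (hN : IsNorm N) : Continuous (clmL hN) :=
  (clmL hN).continuous_of_finiteDimensional

theorem nontrivialNS (hN : IsNorm N) (hn : 0 < n) : Nontrivial (NormSp hN) := by
  refine ⟨toNSL hN (Pi.single ⟨0, hn⟩ 1), 0, fun h => ?_⟩
  have := congrFun h ⟨0, hn⟩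
  change (Pi.single (⟨0, hn⟩ : Fin n) (1:ℝ) : Fin n → ℝ) ⟨0, hn⟩ = (0 : Fin n → ℝ) ⟨0, hn⟩ at this
  simp [Pi.single_eq_same] at this

theorem opNorm_eq (hN : IsNorm N) (hn : 0 < n) (A : Matrix (Fin n) (Fin n) ℝ) :
    opNorm N A = ‖clmL hN A‖ := by
  haveI := nontrivialNS hN hn
  obtain ⟨u, hu⟩ := exists_ne (0 : NormSp hN)
  set e : NormSp hN := ‖u‖⁻¹ • u with he
  have hne : ‖e‖ = 1 := by
    rw [norm_smul, norm_inv, norm_norm]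
    exact inv_mul_cancel₀ (norm_ne_zero_iff.mpr hu)
  set S := (fun x => N (A.mulVec x)) '' {x | N x = 1} with hS
  have hop : opNorm N A = sSup S := rfl
  rw [hop]
  have hmem : ∀ v : NormSp hN, ‖v‖ = 1 → ‖clmL hN A v‖ ∈ S := by
    intro v hv
    exact ⟨v, hv, rfl⟩
  have hSne : S.Nonempty := ⟨_, hmem e hne⟩
  have hub : ∀ s ∈ S, s ≤ ‖clmL hN A‖ := by
    rintro s ⟨v, hv, rfl⟩
    calc N (A.mulVec v) = ‖clmL hN A (toNSL hN v)‖ := rfl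
    _ ≤ ‖clmL hN A‖ * ‖toNSL hN v‖ := (clmL hN A).le_opNorm _
    _ = ‖clmL hN A‖ := by rw [norm_toNSL, hv, mul_one]
  have hbdd : BddAbove S := ⟨_, hub⟩
  refine le_antisymm (csSup_le hSne hub) ?_
  have hS0 : 0 ≤ sSup S := le_csSup_of_le hbdd (hmem e hne) (norm_nonneg _)
  refine (clmL hN A).opNorm_le_bound hS0 fun v => ?_
  rcases eq_or_ne v 0 with rfl | hv
  · simp
  · have hvn : ‖v‖ ≠ 0 := norm_ne_zero_iff.mpr hv
    have h1 : ‖(‖v‖⁻¹ • v : NormSp hN)‖ = 1 := by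
      rw [norm_smul, norm_inv, norm_norm]
      exact inv_mul_cancel₀ hvn
    have hle : ‖clmL hN A (‖v‖⁻¹ • v)‖ ≤ sSup S := le_csSup hbdd (hmem _ h1)
    rw [_root_.map_smul, norm_smul, norm_inv, norm_norm] at hle
    calc ‖clmL hN A v‖ = ‖v‖ * (‖v‖⁻¹ * ‖clmL hN A v‖) := by
          field_simp
    _ ≤ ‖v‖ * sSup S := by
          apply mul_le_mul_of_nonneg_left _ (norm_nonneg _)
          exact hle
    _ = sSup S * ‖v‖ := mul_comm _ _

/-! ### The slope function of the logarithmic norm -/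

section Psi
variable {F : Type*} [NormedAddCommGroup F] [NormedSpace ℝ F] [Nontrivial F]

/-- The slope function whose limit at `0⁺` is the logarithmic norm. -/
noncomputable def psi (B : F →L[ℝ] F) (h : ℝ) : ℝ := (‖1 + h • B‖ - 1) / h

theorem psi_mono (B : F →L[ℝ] F) : MonotoneOn (psi B) (Ioi 0) := by
  rintro a (ha : 0 < a) b (hb : 0 < b) hab
  have hb0 : b ≠ 0 := hb.ne'
  have hab' : a / b * b = a := div_mul_cancel₀ a hb0
  have key : (1 : F →L[ℝ] F) + a • B = (1 - a / b) • 1 + (a / b) • (1 + b • B) := by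
    rw [smul_add, smul_smul, hab', ← add_assoc, ← add_smul]
    norm_num
  have hcoef : (0:ℝ) ≤ 1 - a / b := by
    have : a / b ≤ 1 := (div_le_one hb).mpr hab
    linarith
  have hcoef2 : (0:ℝ) ≤ a / b := le_of_lt (div_pos ha hb)
  have hone : ‖(1 : F →L[ℝ] F)‖ = 1 := norm_one
  have h1 : ‖(1 : F →L[ℝ] F) + a • B‖ ≤ (1 - a / b) + (a / b) * ‖1 + b • B‖ := by
    rw [key]
    calc ‖(1 - a / b) • (1 : F →L[ℝ] F) + (a / b) • (1 + b • B)‖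
        ≤ ‖(1 - a / b) • (1 : F →L[ℝ] F)‖ + ‖(a / b) • (1 + b • B)‖ := norm_add_le _ _
    _ = (1 - a / b) + (a / b) * ‖1 + b • B‖ := by
        have e1 := norm_smul (α := ℝ) (β := F →L[ℝ] F) (1 - a / b) 1
        have e2 := norm_smul (α := ℝ) (β := F →L[ℝ] F) (a / b) (1 + b • B)
        rw [Real.norm_eq_abs, abs_of_nonneg hcoef, hone, mul_one] at e1
        rw [Real.norm_eq_abs, abs_of_nonneg hcoef2] at e2
        rw [e1, e2]
  unfold psi
  rw [div_le_div_iff₀ ha hb]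
  have h2 : (‖(1 : F →L[ℝ] F) + a • B‖ - 1) * b ≤ ((1 - a / b + a / b * ‖1 + b • B‖) - 1) * b :=
    mul_le_mul_of_nonneg_right (by linarith) hb.le
  have h3 : ((1 - a / b + a / b * ‖(1 : F →L[ℝ] F) + b • B‖) - 1) * b
      = (‖(1 : F →L[ℝ] F) + b • B‖ - 1) * a := by
    field_simp
    ring
  linarith

theorem psi_lb (B : F →L[ℝ] F) {h : ℝ} (hh : 0 < h) : -‖B‖ ≤ psi B h := by
  have hone : ‖(1 : F →L[ℝ] F)‖ = 1 := norm_one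
  have : (1:ℝ) ≤ ‖1 + h • B‖ + h * ‖B‖ := by
    calc (1:ℝ) = ‖(1 : F →L[ℝ] F)‖ := hone.symm
    _ = ‖(1 + h • B) + (-(h • B))‖ := by congr 1; abel
    _ ≤ ‖1 + h • B‖ + ‖-(h • B)‖ := norm_add_le _ _
    _ = ‖1 + h • B‖ + h * ‖B‖ := by
        have e1 := norm_smul (α := ℝ) (β := F →L[ℝ] F) h B
        rw [Real.norm_eq_abs, abs_of_pos hh] at e1
        rw [norm_neg, e1]
  unfold psi
  rw [le_div_iff₀ hh]
  nlinarith

theorem psi_bddBelow (B : F →L[ℝ] F) : BddBelow (psi B '' Ioi 0) := by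
  refine ⟨-‖B‖, ?_⟩
  rintro y ⟨h, hh, rfl⟩
  exact psi_lb B hh

theorem psi_tendsto (B : F →L[ℝ] F) :
    Tendsto (psi B) (𝓝[>] 0) (𝓝 (sInf (psi B '' Ioi 0))) :=
  MonotoneOn.tendsto_nhdsGT (psi_mono B) (psi_bddBelow B)

set_option linter.unusedSectionVars false in
theorem exists_psi_lt (B : F →L[ℝ] F) {c ε : ℝ} (hc : sInf (psi B '' Ioi 0) ≤ c) (hε : 0 < ε) :
    ∃ h > 0, psi B h < c + ε := by
  have : sInf (psi B '' Ioi 0) < c + ε := lt_of_le_of_lt hc (by linarith)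
  obtain ⟨y, ⟨h, hh, rfl⟩, hy⟩ :=
    exists_lt_of_csInf_lt (⟨psi B 1, ⟨1, by norm_num, rfl⟩⟩ : (psi B '' Ioi 0).Nonempty) this
  exact ⟨h, hh, hy⟩

end Psi

/-- The logarithmic norm is the infimum of the slope function. -/
theorem logNorm_eq (hN : IsNorm N) (hn : 0 < n) (A : Matrix (Fin n) (Fin n) ℝ) :
    logNorm N A = sInf (psi (clmL hN A) '' Ioi 0) := by
  haveI := nontrivialNS hN hn
  have hfun : (fun h => (opNorm N (1 + h • A) - 1) / h) = psi (clmL hN A) := by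
    funext h
    unfold psi
    rw [opNorm_eq hN hn, map_add, _root_.map_smul, clmL_one]
  unfold logNorm
  rw [hfun]
  exact (psi_tendsto (clmL hN A)).limUnder_eq

/-! ### Staircase mean value theorem -/

theorem nonneg (hN : IsNorm N) (v : Fin n → ℝ) : 0 ≤ N v := by
  rw [← norm_toNSL hN]
  exact norm_nonneg _

theorem triangle' (hN : IsNorm N) (a b : Fin n → ℝ) : N a ≤ N b + N (a - b) := by
  have := hN.1 b (a - b)
  simpa using this

/-- Staircase path point. -/
def stair (a b : Fin n → ℝ) (j : Fin n) (σ : ℝ) : Fin n → ℝ :=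
  fun k => if k < j then a k else if k = j then σ * a j + (1 - σ) * b j else b k

theorem stair_eq (a b : Fin n → ℝ) (j : Fin n) (σ : ℝ) :
    stair a b j σ = stair a b j 0 + σ • ((a j - b j) • (Pi.single j 1 : Fin n → ℝ)) := by
  funext k
  simp only [stair, Pi.add_apply, Pi.smul_apply, smul_eq_mul]
  rcases lt_trichotomy k j with h | h | h
  · rw [if_pos h, if_pos h, Pi.single_eq_of_ne (ne_of_lt h)]
    ring
  · subst h
    rw [if_neg (lt_irrefl _), if_pos rfl, if_neg (lt_irrefl _), if_pos rfl, Pi.single_eq_same]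
    ring
  · rw [if_neg (not_lt_of_gt h), if_neg (ne_of_gt h), if_neg (not_lt_of_gt h),
      if_neg (ne_of_gt h), Pi.single_eq_of_ne (ne_of_gt h)]
    ring

theorem hasDerivAt_stair (a b : Fin n → ℝ) (j : Fin n) (σ : ℝ) :
    HasDerivAt (stair a b j) ((a j - b j) • (Pi.single j 1 : Fin n → ℝ)) σ := by
  have h : (stair a b j)
      = fun σ => stair a b j 0 + σ • ((a j - b j) • (Pi.single j 1 : Fin n → ℝ)) := by
    funext σ; exact stair_eq a b j σ
  rw [h]
  simpa using ((hasDerivAt_id σ).smul_const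
    ((a j - b j) • (Pi.single j 1 : Fin n → ℝ))).const_add (stair a b j 0)

variable {g : (Fin n → ℝ) → (Fin n → ℝ)} {a b : Fin n → ℝ}

theorem continuous_stair (a b : Fin n → ℝ) (j : Fin n) : Continuous (stair a b j) := by
  apply continuous_pi
  intro k
  unfold stair
  split_ifs with h1 h2
  · exact continuous_const
  · fun_prop
  · exact continuous_const

theorem mulVec_eq_sum (σ : ℝ) :
    (mixedJac g b a (fun _ => σ)).mulVec (a - b)
      = ∑ j, (a j - b j) • fderiv ℝ g (stair a b j σ) (Pi.single j 1) := by
  funext i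
  simp only [Matrix.mulVec, dotProduct, mixedJac, Finset.sum_apply, Pi.smul_apply,
    smul_eq_mul, Pi.sub_apply]
  refine Finset.sum_congr rfl fun j _ => ?_
  rw [mul_comm]
  rfl

theorem hasDerivAt_G (hg : Differentiable ℝ g) (σ : ℝ) :
    HasDerivAt (fun σ => ∑ j, g (stair a b j σ))
      ((mixedJac g b a (fun _ => σ)).mulVec (a - b)) σ := by
  rw [mulVec_eq_sum]
  apply HasDerivAt.fun_sum
  intro j _
  have h1 := (hg (stair a b j σ)).hasFDerivAt.comp_hasDerivAt σ (hasDerivAt_stair a b j σ)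
  have h2 : fderiv ℝ g (stair a b j σ) ((a j - b j) • (Pi.single j 1 : Fin n → ℝ))
      = (a j - b j) • fderiv ℝ g (stair a b j σ) (Pi.single j 1) :=
    (fderiv ℝ g (stair a b j σ)).map_smul _ _
  rw [h2] at h1
  exact h1

theorem continuous_D (hg' : Continuous fun p => fderiv ℝ g p) :
    Continuous (fun σ => (mixedJac g b a (fun _ => σ)).mulVec (a - b)) := by
  have h : (fun σ => (mixedJac g b a (fun _ => σ)).mulVec (a - b))
      = fun σ => ∑ j, (a j - b j) • fderiv ℝ g (stair a b j σ) (Pi.single j 1) := by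
    funext σ; exact mulVec_eq_sum σ
  rw [h]
  apply continuous_finset_sum
  intro j _
  exact ((hg'.comp (continuous_stair a b j)).clm_apply continuous_const).const_smul (a j - b j)

/-- staircase endpoints. -/
def q (a b : Fin n → ℝ) (m : ℕ) : Fin n → ℝ := fun k => if (k : ℕ) < m then a k else b k

theorem stair_one (j : Fin n) : stair a b j 1 = q a b (j + 1) := by
  funext k
  simp only [stair, q]
  rcases lt_trichotomy k j with h | h | h
  · rw [if_pos h, if_pos (by exact Nat.lt_succ_of_lt (Fin.lt_def.mp h))]
  · subst h
    rw [if_neg (lt_irrefl _), if_pos rfl, if_pos (Nat.lt_succ_self _)]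
    ring
  · rw [if_neg (not_lt_of_gt h), if_neg (ne_of_gt h),
      if_neg (by exact fun hc => absurd (Fin.lt_def.mp h) (by omega))]

theorem stair_zero (j : Fin n) : stair a b j 0 = q a b j := by
  funext k
  simp only [stair, q]
  rcases lt_trichotomy k j with h | h | h
  · rw [if_pos h, if_pos (Fin.lt_def.mp h)]
  · subst h
    rw [if_neg (lt_irrefl _), if_pos rfl, if_neg (lt_irrefl _)]
    ring
  · rw [if_neg (not_lt_of_gt h), if_neg (ne_of_gt h),
      if_neg (by exact fun hc => absurd (Fin.lt_def.mp h) (by omega))]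

theorem q_n : q a b n = a := by
  funext k
  simp [q, k.isLt]

theorem q_zero : q a b 0 = b := by
  funext k
  simp [q]

theorem meanValue (hg : Differentiable ℝ g) (hg' : Continuous fun p => fderiv ℝ g p)
    (a b : Fin n → ℝ) :
    g a - g b = ∫ σ in (0:ℝ)..1, (mixedJac g b a (fun _ => σ)).mulVec (a - b) := by
  have hint : (∫ σ in (0:ℝ)..1, (mixedJac g b a (fun _ => σ)).mulVec (a - b))
      = (∑ j, g (stair a b j 1)) - (∑ j, g (stair a b j 0)) := by
    exact intervalIntegral.integral_eq_sub_of_hasDerivAt (fun σ _ => hasDerivAt_G hg σ)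
      ((continuous_D hg').intervalIntegrable 0 1)
  rw [hint]
  symm
  calc (∑ j, g (stair a b j 1)) - (∑ j, g (stair a b j 0))
      = ∑ j : Fin n, (g (q a b (j + 1)) - g (q a b j)) := by
        rw [← Finset.sum_sub_distrib]
        exact Finset.sum_congr rfl fun j _ => by rw [stair_one j, stair_zero j]
  _ = ∑ m ∈ Finset.range n, (g (q a b (m + 1)) - g (q a b m)) :=
        Fin.sum_univ_eq_sum_range (fun m => g (q a b (m + 1)) - g (q a b m)) n
  _ = g (q a b n) - g (q a b 0) := Finset.sum_range_sub (fun m => g (q a b m)) n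
  _ = g a - g b := by rw [q_n, q_zero]

/-! ### Uniform small-time operator norm bound via compactness -/

theorem key_compact (hN : IsNorm N) (hn : 0 < n) {c ε : ℝ} (hε : 0 < ε)
    {M : ℝ → Matrix (Fin n) (Fin n) ℝ} (hMc : Continuous M)
    (hMμ : ∀ σ ∈ Icc (0:ℝ) 1, sInf (psi (clmL hN (M σ)) '' Ioi 0) ≤ c) :
    ∃ h₀ > 0, ∀ σ ∈ Icc (0:ℝ) 1, ∀ h : ℝ, 0 < h → h ≤ h₀ →
      ‖1 + h • clmL hN (M σ)‖ ≤ 1 + (c + ε) * h := by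
  haveI := nontrivialNS hN hn
  set B : ℝ → (NormSp hN →L[ℝ] NormSp hN) := fun σ => clmL hN (M σ) with hB
  have hBc : Continuous B := (continuous_clmL hN).comp hMc
  have hex : ∀ σ ∈ Icc (0:ℝ) 1, ∃ h > 0, psi (B σ) h < c + ε := fun σ hσ =>
    exists_psi_lt (B σ) (hMμ σ hσ) hε
  classical
  set H : ℝ → ℝ := fun σ => if hm : σ ∈ Icc (0:ℝ) 1 then (hex σ hm).choose else 1 with hH
  have hHpos : ∀ σ ∈ Icc (0:ℝ) 1, 0 < H σ := by
    intro σ hσ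
    rw [hH]
    simp only [dif_pos hσ]
    exact (hex σ hσ).choose_spec.1
  have hHlt : ∀ σ ∈ Icc (0:ℝ) 1, psi (B σ) (H σ) < c + ε := by
    intro σ hσ
    rw [hH]
    simp only [dif_pos hσ]
    exact (hex σ hσ).choose_spec.2
  set U : ℝ → Set ℝ := fun σ => {σ' | ‖1 + H σ • B σ'‖ < 1 + (c + ε) * H σ} with hU
  have hUnhds : ∀ σ ∈ Icc (0:ℝ) 1, U σ ∈ 𝓝 σ := by
    intro σ hσ
    have hopen : IsOpen (U σ) := by
      have : Continuous fun σ' => ‖1 + H σ • B σ'‖ :=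
        (continuous_const.add (hBc.const_smul (H σ))).norm
      exact isOpen_lt this continuous_const
    refine hopen.mem_nhds ?_
    have := hHlt σ hσ
    have hp := hHpos σ hσ
    simp only [hU, mem_setOf_eq]
    unfold psi at this
    rw [div_lt_iff₀ hp] at this
    linarith [this]
  obtain ⟨t, hts, htcov⟩ := isCompact_Icc.elim_nhds_subcover U hUnhds
  have htne : t.Nonempty := by
    rcases Finset.eq_empty_or_nonempty t with rfl | h
    · exfalso
      have := htcov (left_mem_Icc.mpr zero_le_one)
      simpa using this
    · exact h
  refine ⟨t.inf' htne H, ?_, ?_⟩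
  · rw [gt_iff_lt, Finset.lt_inf'_iff]
    intro σ hσ
    exact hHpos σ (hts σ hσ)
  · intro σ hσ h hh hh0
    obtain ⟨σ₀, hσ₀t, hσU⟩ := by
      have := htcov hσ
      simpa using this
    have hps : psi (B σ) (H σ₀) < c + ε := by
      have hp := hHpos σ₀ (hts σ₀ hσ₀t)
      unfold psi
      rw [div_lt_iff₀ hp]
      have : ‖1 + H σ₀ • B σ‖ < 1 + (c + ε) * H σ₀ := hσU
      linarith
    have hh1 : h ≤ H σ₀ := le_trans hh0 (Finset.inf'_le H hσ₀t)
    have hmono : psi (B σ) h ≤ psi (B σ) (H σ₀) :=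
      psi_mono (B σ) (mem_Ioi.mpr hh) (mem_Ioi.mpr (hHpos σ₀ (hts σ₀ hσ₀t))) hh1
    have : psi (B σ) h < c + ε := lt_of_le_of_lt hmono hps
    unfold psi at this
    rw [div_lt_iff₀ hh] at this
    linarith

end Stmt7Aux

open Stmt7Aux

theorem stmt7 {n : ℕ} (N : (Fin n → ℝ) → ℝ) (hN : IsNorm N)
    (X : Set (Fin n → ℝ)) (f : ℝ → (Fin n → ℝ) → (Fin n → ℝ))
    (hfc : Continuous fun p : ℝ × (Fin n → ℝ) => f p.1 p.2)
    (hfd : ∀ t, Differentiable ℝ (f t))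
    (hfd' : Continuous fun p : ℝ × (Fin n → ℝ) => fderiv ℝ (f p.1) p.2)
    (J : Set ℝ) (hJ : J.OrdConnected)
    (x' : ℝ → Fin n → ℝ) (hx'c : ContinuousOn x' J)
    (hx'd : ∀ t ∈ interior J, HasDerivAt x' (f t (x' t)) t)
    (hx'X : ∀ t ∈ J, x' t ∈ X)
    (c : ℝ)
    (hμ : ∀ t ∈ J, ∀ x ∈ X, ∀ s : Fin n → ℝ, (∀ k, s k ∈ Icc (0:ℝ) 1) →
      logNorm N (mixedJac (f t) (x' t) x s) ≤ c)
    (t₀ T : ℝ) (ht : t₀ ≤ T) (hsub : Icc t₀ T ⊆ J)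
    (x : ℝ → Fin n → ℝ) (hxc : ContinuousOn x (Icc t₀ T))
    (hxd : ∀ t ∈ Ioo t₀ T, HasDerivAt x (f t (x t)) t)
    (hxX : ∀ t ∈ Icc t₀ T, x t ∈ X) :
    ∀ t ∈ Icc t₀ T, N (x t - x' t) ≤ Real.exp (c * (t - t₀)) * N (x t₀ - x' t₀) := by
  intro t htT
  rcases Nat.eq_zero_or_pos n with hn0 | hn
  · have hz : ∀ z : ℝ, x z - x' z = 0 := fun z => funext fun k => absurd k.2 (by omega)
    rw [hz t, hz t₀, nzero hN]
    simp
  haveI := nontrivialNS hN hn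
  have hNc : Continuous N := continuous_N hN
  -- Step A: the Dini-derivative slope estimate at interior points
  have slope_est : ∀ tt ∈ Ioo t₀ T, ∀ r : ℝ, c * N (x tt - x' tt) < r →
      ∀ᶠ z in 𝓝[>] tt, (z - tt)⁻¹ * (N (x z - x' z) - N (x tt - x' tt)) < r := by
    intro tt htt r hr
    have httJ : tt ∈ J := hsub (Ioo_subset_Icc_self htt)
    have hgd : Differentiable ℝ (f tt) := hfd tt
    have hgc : Continuous fun p => fderiv ℝ (f tt) p :=
      hfd'.comp (continuous_const.prodMk continuous_id)
    have hNy : 0 ≤ N (x tt - x' tt) := nonneg hN _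
    set ε : ℝ := (r - c * N (x tt - x' tt)) / (2 * (N (x tt - x' tt) + 1)) with hεdef
    have hε : 0 < ε := div_pos (by linarith) (by linarith)
    have hεy : (c + ε) * N (x tt - x' tt) < r := by
      have h1 : ε * N (x tt - x' tt) < ε * (N (x tt - x' tt) + 1) :=
        mul_lt_mul_of_pos_left (by linarith) hε
      have h2 : ε * (N (x tt - x' tt) + 1) = (r - c * N (x tt - x' tt)) / 2 := by
        rw [hεdef]; field_simp
      nlinarith
    have hMc : Continuous fun σ => mixedJac (f tt) (x' tt) (x tt) (fun _ => σ) := by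
      apply continuous_pi; intro i; apply continuous_pi; intro j
      have hrw : (fun σ => mixedJac (f tt) (x' tt) (x tt) (fun _ => σ) i j)
          = fun σ => fderiv ℝ (f tt) (stair (x tt) (x' tt) j σ) (Pi.single j 1) i := rfl
      rw [hrw]
      exact (continuous_apply i).comp
        ((hgc.comp (continuous_stair _ _ j)).clm_apply continuous_const)
    have hMμ : ∀ σ ∈ Icc (0:ℝ) 1,
        sInf (psi (clmL hN (mixedJac (f tt) (x' tt) (x tt) (fun _ => σ))) '' Ioi 0) ≤ c := by
      intro σ hσ
      rw [← logNorm_eq hN hn]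
      exact hμ tt httJ (x tt) (hxX tt (Ioo_subset_Icc_self htt)) (fun _ => σ) (fun _ => hσ)
    obtain ⟨h₀, hh₀, hkey⟩ := key_compact hN hn hε hMc hMμ
    -- small-time estimate on `N (y + h • w)`
    have hb : ∀ h : ℝ, 0 < h → h ≤ h₀ →
        N ((x tt - x' tt) + h • (f tt (x tt) - f tt (x' tt)))
          ≤ (1 + (c + ε) * h) * N (x tt - x' tt) := by
      intro h hh hhle
      have hDc : Continuous fun σ =>
          (mixedJac (f tt) (x' tt) (x tt) (fun _ => σ)).mulVec (x tt - x' tt) :=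
        continuous_D hgc
      have hIc : Continuous fun σ => (x tt - x' tt)
          + h • (mixedJac (f tt) (x' tt) (x tt) (fun _ => σ)).mulVec (x tt - x' tt) :=
        continuous_const.add (hDc.const_smul h)
      have hint : (x tt - x' tt) + h • (f tt (x tt) - f tt (x' tt))
          = ∫ σ in (0:ℝ)..1, ((x tt - x' tt)
              + h • (mixedJac (f tt) (x' tt) (x tt) (fun _ => σ)).mulVec (x tt - x' tt)) := by
        rw [intervalIntegral.integral_add (g := fun σ => h • (mixedJac (f tt) (x' tt) (x tt) (fun _ => σ)).mulVec (x tt - x' tt)) intervalIntegrable_const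
            ((hDc.const_smul h).intervalIntegrable 0 1),
          intervalIntegral.integral_smul, ← meanValue hgd hgc (x tt) (x' tt),
          intervalIntegral.integral_const]
        norm_num
      calc N ((x tt - x' tt) + h • (f tt (x tt) - f tt (x' tt)))
          = ‖toNSL hN ((x tt - x' tt) + h • (f tt (x tt) - f tt (x' tt)))‖ :=
            (norm_toNSL hN _).symm
      _ = ‖∫ σ in (0:ℝ)..1, toNSL hN ((x tt - x' tt)
            + h • (mixedJac (f tt) (x' tt) (x tt) (fun _ => σ)).mulVec (x tt - x' tt))‖ := by
            rw [hint, ← ContinuousLinearMap.intervalIntegral_comp_comm _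
              (hIc.intervalIntegrable 0 1)]
      _ ≤ (1 + (c + ε) * h) * N (x tt - x' tt) := by
            have hptw : ∀ σ ∈ Set.uIoc (0:ℝ) 1, ‖toNSL hN ((x tt - x' tt)
                + h • (mixedJac (f tt) (x' tt) (x tt) (fun _ => σ)).mulVec (x tt - x' tt))‖
                  ≤ (1 + (c + ε) * h) * N (x tt - x' tt) := by
              intro σ hσ
              have hσI : σ ∈ Icc (0:ℝ) 1 := by
                rw [uIoc_of_le (by norm_num : (0:ℝ) ≤ 1)] at hσ
                exact Ioc_subset_Icc_self hσ
              have hiden : toNSL hN ((x tt - x' tt)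
                  + h • (mixedJac (f tt) (x' tt) (x tt) (fun _ => σ)).mulVec (x tt - x' tt))
                  = (1 + h • clmL hN (mixedJac (f tt) (x' tt) (x tt) (fun _ => σ)))
                      (toNSL hN (x tt - x' tt)) := by
                rw [map_add, _root_.map_smul]
                rw [ContinuousLinearMap.add_apply, ContinuousLinearMap.one_apply,
                  ContinuousLinearMap.smul_apply, clmL_apply]
              rw [hiden]
              calc ‖(1 + h • clmL hN (mixedJac (f tt) (x' tt) (x tt) (fun _ => σ)))
                    (toNSL hN (x tt - x' tt))‖
                  ≤ ‖1 + h • clmL hN (mixedJac (f tt) (x' tt) (x tt) (fun _ => σ))‖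
                      * ‖toNSL hN (x tt - x' tt)‖ := ContinuousLinearMap.le_opNorm _ _
              _ ≤ (1 + (c + ε) * h) * N (x tt - x' tt) := by
                  rw [norm_toNSL]
                  exact mul_le_mul_of_nonneg_right (hkey σ hσI h hh hhle) (nonneg hN _)
            have := intervalIntegral.norm_integral_le_of_norm_le_const hptw
            simpa using this
    -- the derivative of `z ↦ x z - x' z`
    have hintJ : tt ∈ interior J := by
      apply interior_mono hsub
      rw [interior_Icc]
      exact htt
    have hyd : HasDerivAt (fun z => x z - x' z)
        (f tt (x tt) - f tt (x' tt)) tt := (hxd tt htt).sub (hx'd tt hintJ)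
    have hslope := hasDerivAt_iff_tendsto_slope.mp hyd
    have htend : Tendsto (fun z => N (slope (fun z => x z - x' z) tt z
        - (f tt (x tt) - f tt (x' tt)))) (𝓝[≠] tt) (𝓝 0) := by
      have h1 : Tendsto (fun z => slope (fun z => x z - x' z) tt z
          - (f tt (x tt) - f tt (x' tt))) (𝓝[≠] tt) (𝓝 0) := by
        simpa using hslope.sub_const (f tt (x tt) - f tt (x' tt))
      have h2 := (hNc.tendsto 0).comp h1
      rwa [nzero hN] at h2
    have hε' : 0 < r - (c + ε) * N (x tt - x' tt) := by linarith
    have hev1 : ∀ᶠ z in 𝓝[≠] tt, N (slope (fun z => x z - x' z) tt z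
        - (f tt (x tt) - f tt (x' tt))) < r - (c + ε) * N (x tt - x' tt) :=
      htend.eventually (Filter.Tendsto.eventually_lt_const hε' tendsto_id)
    have hmono : 𝓝[>] tt ≤ 𝓝[≠] tt := nhdsWithin_mono tt fun z hz => ne_of_gt hz
    have hev2 : Ioc tt (tt + h₀) ∈ 𝓝[>] tt :=
      Ioc_mem_nhdsGT_of_mem ⟨le_rfl, by linarith⟩
    filter_upwards [hev1.filter_mono hmono, hev2] with z hz1 hz2
    have hzt : 0 < z - tt := sub_pos.mpr hz2.1
    have hzh : z - tt ≤ h₀ := by linarith [hz2.2]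
    have e2 : (x z - x' z) - ((x tt - x' tt) + (z - tt) • (f tt (x tt) - f tt (x' tt)))
        = (z - tt) • (slope (fun z => x z - x' z) tt z - (f tt (x tt) - f tt (x' tt))) := by
      have hss := sub_smul_slope (fun z => x z - x' z) tt z
      rw [smul_sub (z - tt) (slope (fun z => x z - x' z) tt z)
        (f tt (x tt) - f tt (x' tt)), hss]
      simp only [vsub_eq_sub]
      abel
    have e1 : N (x z - x' z)
        ≤ N ((x tt - x' tt) + (z - tt) • (f tt (x tt) - f tt (x' tt)))
          + N ((z - tt) • (slope (fun z => x z - x' z) tt z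
              - (f tt (x tt) - f tt (x' tt)))) := by
      rw [← e2]
      exact triangle' hN _ _
    have e3 : N ((z - tt) • (slope (fun z => x z - x' z) tt z
        - (f tt (x tt) - f tt (x' tt))))
        = (z - tt) * N (slope (fun z => x z - x' z) tt z
            - (f tt (x tt) - f tt (x' tt))) := by
      rw [hN.2.1, abs_of_pos hzt]
    have e4 := hb (z - tt) hzt hzh
    rw [inv_mul_lt_iff₀ hzt]
    have e5 : (z - tt) * N (slope (fun z => x z - x' z) tt z
        - (f tt (x tt) - f tt (x' tt)))
        < (z - tt) * (r - (c + ε) * N (x tt - x' tt)) :=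
      mul_lt_mul_of_pos_left hz1 hzt
    nlinarith [e1, e3, e4, e5]
  -- Step B: Grönwall on `[t₁, T]` for interior `t₁`
  have gron : ∀ t₁, t₁ ∈ Ioo t₀ T → ∀ z ∈ Icc t₁ T,
      N (x z - x' z) ≤ N (x t₁ - x' t₁) * Real.exp (c * (z - t₁)) := by
    intro t₁ ht₁ z hz
    have hIccsub : Icc t₁ T ⊆ Icc t₀ T := Icc_subset_Icc ht₁.1.le le_rfl
    have hcont : ContinuousOn (fun z => N (x z - x' z)) (Icc t₁ T) :=
      hNc.comp_continuousOn ((hxc.mono hIccsub).sub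
        ((hx'c.mono hsub).mono hIccsub))
    have h := le_gronwallBound_of_liminf_deriv_right_le (f := fun z => N (x z - x' z))
      (f' := fun z => c * N (x z - x' z)) (δ := N (x t₁ - x' t₁)) (K := c) (ε := 0)
      hcont ?_ le_rfl (fun z _ => by simp) z hz
    · rwa [gronwallBound_ε0] at h
    · intro zz hzz r hr
      have hzzI : zz ∈ Ioo t₀ T := ⟨lt_of_lt_of_le ht₁.1 hzz.1, hzz.2⟩
      exact (slope_est zz hzzI r hr).frequently
  -- Step C: limit `t₁ → t₀⁺`
  rcases eq_or_lt_of_le htT.1 with heq | hlt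
  · rw [← heq]
    simp
  · have hT : t₀ < T := lt_of_lt_of_le hlt htT.2
    have hvc : ContinuousWithinAt (fun z => N (x z - x' z)) (Icc t₀ T) t₀ :=
      (hNc.comp_continuousOn (hxc.sub (hx'c.mono hsub))).continuousWithinAt
        (left_mem_Icc.mpr ht)
    have htt : Tendsto (fun t₁ => N (x t₁ - x' t₁) * Real.exp (c * (t - t₁))) (𝓝[>] t₀)
        (𝓝 (N (x t₀ - x' t₀) * Real.exp (c * (t - t₀)))) := by
      apply Tendsto.mul
      · have h1 : Tendsto (fun z => N (x z - x' z)) (𝓝[Icc t₀ T] t₀)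
            (𝓝 (N (x t₀ - x' t₀))) := hvc
        have h2 : 𝓝[>] t₀ ≤ 𝓝[Icc t₀ T] t₀ := by
          rw [← nhdsWithin_Ioc_eq_nhdsGT hT]
          exact nhdsWithin_mono t₀ Ioc_subset_Icc_self
        exact h1.mono_left h2
      · have : Continuous fun t₁ : ℝ => Real.exp (c * (t - t₁)) := by fun_prop
        exact (this.tendsto t₀).mono_left nhdsWithin_le_nhds
    rw [mul_comm]
    apply ge_of_tendsto htt
    filter_upwards [Ioo_mem_nhdsGT_of_mem (⟨le_rfl, hlt⟩ : t₀ ∈ Ico t₀ t)] with t₁ ht₁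
    exact gron t₁ ⟨ht₁.1, lt_of_lt_of_le ht₁.2 htT.2⟩ t ⟨ht₁.2.le, htT.2⟩
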